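/- If C is an n-γ-closed subset of a topological space X, then θⁿ-aL(C, X) ≤ θⁿ-aL(X), i.e., every cover of C by open subsets of X has a subfamily of cardinality at most θⁿ-aL(X) whose n-θ-closures cover C. -/
import Mathlib


open Set Topology Cardinal

universe u v

def thetaCl (X : Type u) [TopologicalSpace X] (A : Set X) : Set X :=
  {x | ∀ U : Set X, IsOpen U → x ∈ U → (closure U ∩ A).Nonempty}

def thetaClN (X : Type u) [TopologicalSpace X] (n : ℕ) (A : Set X) : Set X :=
  (thetaCl X)^[n] A

def gammaCl (X : Type u) [TopologicalSpace X] (n : ℕ) (A : Set X) : Set X :=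
  {x | ∀ U : Set X, IsOpen U → x ∈ U → (thetaClN X n U ∩ A).Nonempty}

def ThetaUrysohn (X : Type u) [TopologicalSpace X] (n : ℕ) : Prop :=
  ∀ x y : X, x ≠ y → ∃ U V : Set X, IsOpen U ∧ IsOpen V ∧ x ∈ U ∧ y ∈ V ∧
    thetaClN X n U ∩ thetaClN X n V = ∅

noncomputable def thetaAL (X : Type u) [TopologicalSpace X] (n : ℕ) : Cardinal.{u} :=
  sInf {κ | ℵ₀ ≤ κ ∧ ∀ V : Set (Set X), (∀ U ∈ V, IsOpen U) → ⋃₀ V = Set.univ →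
    ∃ V' ⊆ V, #V' ≤ κ ∧ (⋃ U ∈ V', thetaClN X n U) = Set.univ}

noncomputable def thetaALrel (X : Type u) [TopologicalSpace X] (n : ℕ) (Y : Set X) : Cardinal.{u} :=
  sInf {κ | ℵ₀ ≤ κ ∧ ∀ V : Set (Set X), (∀ U ∈ V, IsOpen U) → Y ⊆ ⋃₀ V →
    ∃ V' ⊆ V, #V' ≤ κ ∧ Y ⊆ ⋃ U ∈ V', thetaClN X n U}


lemma subset_thetaCl {X : Type u} [TopologicalSpace X] (A : Set X) : A ⊆ thetaCl X A :=
  fun x hx U _ hxU => ⟨x, subset_closure hxU, hx⟩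

lemma subset_thetaClN {X : Type u} [TopologicalSpace X] (n : ℕ) (A : Set X) :
    A ⊆ thetaClN X n A := by
  induction n with
  | zero => exact subset_rfl
  | succ n ih =>
    have : thetaClN X (n + 1) A = thetaCl X (thetaClN X n A) := by
      simp [thetaClN, Function.iterate_succ_apply']
    rw [this]
    exact ih.trans (subset_thetaCl _)

lemma thetaAL_set_nonempty (X : Type u) [TopologicalSpace X] (n : ℕ) :
    {κ : Cardinal.{u} | ℵ₀ ≤ κ ∧ ∀ V : Set (Set X), (∀ U ∈ V, IsOpen U) → ⋃₀ V = Set.univ →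
      ∃ V' ⊆ V, #V' ≤ κ ∧ (⋃ U ∈ V', thetaClN X n U) = Set.univ}.Nonempty := by
  refine ⟨max ℵ₀ #(Set X), le_max_left _ _, fun V _ hcov => ⟨V, subset_rfl,
    (Cardinal.mk_set_le V).trans (le_max_right _ _), ?_⟩⟩
  apply eq_univ_of_univ_subset
  rw [← hcov, sUnion_eq_biUnion]
  exact iUnion₂_mono fun U _ => subset_thetaClN n U

theorem thetaALrel_le_thetaAL (X : Type u) [TopologicalSpace X] (n : ℕ) (C : Set X)
    (hC : gammaCl X n C = C) : thetaALrel X n C ≤ thetaAL X n := by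
  obtain ⟨hκ0, hκ⟩ := csInf_mem (thetaAL_set_nonempty X n)
  apply csInf_le'
  refine ⟨hκ0, fun V hV hcov => ?_⟩
  set W := V ∪ {U : Set X | IsOpen U ∧ thetaClN X n U ∩ C = ∅} with hWdef
  have hWopen : ∀ U ∈ W, IsOpen U := by
    rintro U (h | h)
    · exact hV U h
    · exact h.1
  have hWcov : ⋃₀ W = Set.univ := by
    apply eq_univ_of_forall; intro x
    by_cases hx : x ∈ C
    · obtain ⟨U, hU, hxU⟩ := hcov hx
      exact ⟨U, Or.inl hU, hxU⟩
    · have hx' : x ∉ gammaCl X n C := by rw [hC]; exact hx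
      simp only [gammaCl, mem_setOf_eq, not_forall] at hx'
      obtain ⟨U, hU, hxU, hne'⟩ := hx'
      exact ⟨U, Or.inr ⟨hU, not_nonempty_iff_eq_empty.mp hne'⟩, hxU⟩
  obtain ⟨W', hW'sub, hW'card, hW'cov⟩ := hκ W hWopen hWcov
  refine ⟨W' ∩ V, inter_subset_right, (Cardinal.mk_le_mk_of_subset inter_subset_left).trans hW'card, ?_⟩
  intro x hx
  have hxu : x ∈ ⋃ U ∈ W', thetaClN X n U := hW'cov ▸ mem_univ x
  obtain ⟨U, hU, hxU⟩ := mem_iUnion₂.mp hxu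
  rcases hW'sub hU with h | h
  · exact mem_iUnion₂.mpr ⟨U, ⟨hU, h⟩, hxU⟩
  · have hmem : x ∈ thetaClN X n U ∩ C := ⟨hxU, hx⟩
    rw [h.2] at hmem
    exact hmem.elim
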